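/- For d, k ≥ 0 and n ≥ 1 (and k ≥ 1), the quantity ℓ_d^k(n), the maximum number of leaves of a rooted tree of out-degree at most d and depth at most n that does not contain the full binary tree of depth k+1 as a minor, satisfies the recurrence ℓ_d^k(n) = ℓ_d^k(n−1) + (d−1)·ℓ_d^{k−1}(n−1). -/

import Mathlib

/-- A rooted tree, encoded as a finite prefix-closed set of finite sequences of
natural numbers containing the root `[]`; `v ++ [i]` is a child of `v`. -/
def IsTreeSet (T : Finset (List ℕ)) : Prop :=
  [] ∈ T ∧ ∀ (v : List ℕ) (i : ℕ), v ++ [i] ∈ T → v ∈ T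

/-- Every node of `T` has at most `d` children (out-degree at most `d`). -/
def DegLE (T : Finset (List ℕ)) (d : ℕ) : Prop :=
  ∀ v ∈ T, { i : ℕ | v ++ [i] ∈ T }.ncard ≤ d

/-- Every node of `T` has depth at most `n`. -/
def DepthLE (T : Finset (List ℕ)) (n : ℕ) : Prop :=
  ∀ v ∈ T, v.length ≤ n

/-- `v` is a leaf of `T`. -/
def IsLeaf (T : Finset (List ℕ)) (v : List ℕ) : Prop :=
  v ∈ T ∧ ∀ i : ℕ, v ++ [i] ∉ T

/-- The number of leaves of `T`. -/
noncomputable def leafCount (T : Finset (List ℕ)) : ℕ :=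
  { v : List ℕ | IsLeaf T v }.ncard

/-- `T` contains the full binary tree of depth `m` as a minor: there is a map
`f` from binary strings of length at most `m` into `T` sending children to
proper descendants, such that the images of the two children of a node are
incomparable. -/
def HasFBTMinor (T : Finset (List ℕ)) (m : ℕ) : Prop :=
  ∃ f : List (Fin 2) → List ℕ,
    (∀ v : List (Fin 2), v.length ≤ m → f v ∈ T) ∧
    (∀ (v : List (Fin 2)) (j : Fin 2), v.length < m →
        f v <+: f (v ++ [j]) ∧ f v ≠ f (v ++ [j])) ∧
    (∀ v : List (Fin 2), v.length < m →
        ¬ f (v ++ [0]) <+: f (v ++ [1]) ∧ ¬ f (v ++ [1]) <+: f (v ++ [0]))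

/-- `ell d k n`: the maximum number of leaves of a rooted tree with out-degree
at most `d` and depth at most `n` that does not contain the full binary tree of
depth `k+1` as a minor. -/
noncomputable def ell (d k n : ℕ) : ℕ :=
  sSup { L : ℕ | ∃ T : Finset (List ℕ),
    IsTreeSet T ∧ DegLE T d ∧ DepthLE T n ∧ ¬ HasFBTMinor T (k + 1) ∧
    leafCount T = L }

-- ===== aux =====
open Classical

lemma treeSet_append_mem {T : Finset (List ℕ)} (hT : IsTreeSet T) :
    ∀ (w u : List ℕ), u ++ w ∈ T → u ∈ T := by
  intro w
  induction w using List.reverseRecOn with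
  | nil => intro u h; simpa using h
  | append_singleton w i ih =>
      intro u h
      exact ih u (hT.2 (u ++ w) i (by simpa [List.append_assoc] using h))

lemma treeSet_prefix_mem {T : Finset (List ℕ)} (hT : IsTreeSet T)
    {u v : List ℕ} (h : u <+: v) (hv : v ∈ T) : u ∈ T := by
  obtain ⟨w, rfl⟩ := h
  exact treeSet_append_mem hT w u hv

noncomputable def leavesF (T : Finset (List ℕ)) : Finset (List ℕ) :=
  T.filter (fun v => ∀ i, v ++ [i] ∉ T)

lemma mem_leavesF {T : Finset (List ℕ)} {v : List ℕ} :
    v ∈ leavesF T ↔ IsLeaf T v := by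
  simp [leavesF, IsLeaf]

lemma leafCount_eq (T : Finset (List ℕ)) : leafCount T = (leavesF T).card := by
  rw [leafCount, show { v : List ℕ | IsLeaf T v } = ↑(leavesF T) by
    ext v; simp [mem_leavesF], Set.ncard_coe_finset]

def childT (T : Finset (List ℕ)) (i : ℕ) : Finset (List ℕ) :=
  (T.filter (fun v => v.head? = some i)).image List.tail

lemma mem_childT {T : Finset (List ℕ)} {i : ℕ} {w : List ℕ} :
    w ∈ childT T i ↔ i :: w ∈ T := by
  simp only [childT, Finset.mem_image, Finset.mem_filter]
  constructor
  · rintro ⟨v, ⟨hv, hh⟩, rfl⟩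
    cases v with
    | nil => simp at hh
    | cons a t => simp at hh; simpa [hh] using hv
  · intro h
    exact ⟨i :: w, ⟨h, rfl⟩, rfl⟩

def childIdx (T : Finset (List ℕ)) : Finset ℕ :=
  (T.filter (fun v => v.length = 1)).image (fun v => v.headI)

lemma mem_childIdx {T : Finset (List ℕ)} {i : ℕ} :
    i ∈ childIdx T ↔ [i] ∈ T := by
  simp only [childIdx, Finset.mem_image, Finset.mem_filter]
  constructor
  · rintro ⟨v, ⟨hv, hl⟩, rfl⟩
    match v, hl with
    | [a], _ => simpa using hv
  · intro h; exact ⟨[i], ⟨h, rfl⟩, rfl⟩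

lemma childT_isTreeSet {T : Finset (List ℕ)} (hT : IsTreeSet T) {i : ℕ}
    (hi : [i] ∈ T) : IsTreeSet (childT T i) := by
  constructor
  · rw [mem_childT]; simpa using hi
  · intro v j h
    rw [mem_childT] at *
    exact hT.2 (i :: v) j (by simpa using h)

lemma childT_degLE {T : Finset (List ℕ)} {d : ℕ} (hd : DegLE T d) (i : ℕ) :
    DegLE (childT T i) d := by
  intro v hv
  have := hd (i :: v) (mem_childT.1 hv)
  have hset : { j : ℕ | v ++ [j] ∈ childT T i } = { j : ℕ | (i :: v) ++ [j] ∈ T } := by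
    ext j; simp [mem_childT]
  rw [hset]; exact this

lemma childT_depthLE {T : Finset (List ℕ)} {n : ℕ} (hd : DepthLE T (n + 1)) (i : ℕ) :
    DepthLE (childT T i) n := by
  intro v hv
  have := hd (i :: v) (mem_childT.1 hv)
  simpa using this

lemma childIdx_card_le {T : Finset (List ℕ)} {d : ℕ} (hd : DegLE T d)
    (h0 : [] ∈ T) : (childIdx T).card ≤ d := by
  have := hd [] h0
  have hset : { i : ℕ | [] ++ [i] ∈ T } = ↑(childIdx T) := by
    ext i; simp [mem_childIdx]
  rw [hset, Set.ncard_coe_finset] at this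
  exact this

lemma leavesF_decomp {T : Finset (List ℕ)} (hT : IsTreeSet T)
    (hne : (childIdx T).Nonempty) :
    leavesF T = (childIdx T).biUnion (fun i => (leavesF (childT T i)).image (i :: ·)) := by
  ext v
  simp only [Finset.mem_biUnion, Finset.mem_image, mem_leavesF, mem_childIdx, IsLeaf,
    mem_childT]
  constructor
  · rintro ⟨hv, hleaf⟩
    cases v with
    | nil =>
        obtain ⟨i, hi⟩ := hne
        exact absurd (mem_childIdx.1 hi) (by simpa using hleaf i)
    | cons a w =>
        refine ⟨a, ?_, w, ⟨⟨by simpa using hv, fun j hj => hleaf j (by simpa using hj)⟩, rfl⟩⟩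
        exact treeSet_prefix_mem hT ⟨w, rfl⟩ hv
  · rintro ⟨i, hi, w, ⟨⟨hw, hleaf⟩, rfl⟩⟩
    exact ⟨hw, fun j hj => hleaf j (by simpa using hj)⟩

lemma leafCount_decomp {T : Finset (List ℕ)} (hT : IsTreeSet T)
    (hne : (childIdx T).Nonempty) :
    leafCount T = ∑ i ∈ childIdx T, leafCount (childT T i) := by
  rw [leafCount_eq, leavesF_decomp hT hne, Finset.card_biUnion]
  · exact Finset.sum_congr rfl fun i _ => by
      rw [Finset.card_image_of_injective _ (fun a b => by simp), leafCount_eq]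
  · intro i _ j _ hij
    simp only [Finset.disjoint_left, Finset.mem_image]
    rintro v ⟨a, _, rfl⟩ ⟨b, _, h⟩
    exact hij (by injection h with h1 _; omega)

lemma childIdx_empty_tree {T : Finset (List ℕ)} (hT : IsTreeSet T)
    (h : childIdx T = ∅) : T = {[]} := by
  ext v
  simp only [Finset.mem_singleton]
  constructor
  · intro hv
    cases v with
    | nil => rfl
    | cons a w =>
        exfalso
        have : a ∈ childIdx T := mem_childIdx.2 (treeSet_prefix_mem hT ⟨w, rfl⟩ hv)
        simp [h] at this
  · rintro rfl; exact hT.1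

lemma leafCount_singleton : leafCount ({[]} : Finset (List ℕ)) = 1 := by
  rw [leafCount_eq]
  have : leavesF ({[]} : Finset (List ℕ)) = {[]} := by
    ext v
    simp [mem_leavesF, IsLeaf]
  rw [this]; simp

lemma leafCount_bound {T : Finset (List ℕ)} {d n : ℕ} (hT : IsTreeSet T)
    (hd : DegLE T d) (hn : DepthLE T n) : leafCount T ≤ (d + 1) ^ n := by
  induction n generalizing T with
  | zero =>
      have : childIdx T = ∅ := by
        rw [Finset.eq_empty_iff_forall_notMem]
        intro i hi
        have := hn [i] (mem_childIdx.1 hi)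
        simp at this
      rw [childIdx_empty_tree hT this, leafCount_singleton]
      simp
  | succ n ih =>
      rcases (childIdx T).eq_empty_or_nonempty with h | h
      · rw [childIdx_empty_tree hT h, leafCount_singleton]
        exact Nat.one_le_pow _ _ (by omega)
      · rw [leafCount_decomp hT h]
        calc ∑ i ∈ childIdx T, leafCount (childT T i)
            ≤ ∑ _i ∈ childIdx T, (d + 1) ^ n := by
              refine Finset.sum_le_sum fun i hi => ?_
              exact ih (childT_isTreeSet hT (mem_childIdx.1 hi)) (childT_degLE hd i)
                (childT_depthLE hn i)
          _ = (childIdx T).card * (d + 1) ^ n := by rw [Finset.sum_const, smul_eq_mul]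
          _ ≤ d * (d + 1) ^ n := by
              exact Nat.mul_le_mul_right _ (childIdx_card_le hd hT.1)
          _ ≤ (d + 1) ^ (n + 1) := by rw [pow_succ]; nlinarith [Nat.one_le_pow n (d+1) (by omega)]

-- ===== minor lemmas =====

lemma minor_mono {T : Finset (List ℕ)} {m m' : ℕ} (h : m ≤ m')
    (hm : HasFBTMinor T m') : HasFBTMinor T m := by
  obtain ⟨f, h1, h2, h3⟩ := hm
  exact ⟨f, fun v hv => h1 v (hv.trans h),
    fun v j hv => h2 v j (lt_of_lt_of_le hv h),
    fun v hv => h3 v (lt_of_lt_of_le hv h)⟩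

lemma minor_lift {T : Finset (List ℕ)} {i m : ℕ}
    (h : HasFBTMinor (childT T i) m) : HasFBTMinor T m := by
  obtain ⟨f, h1, h2, h3⟩ := h
  refine ⟨fun v => i :: f v, fun v hv => mem_childT.1 (h1 v hv), ?_, ?_⟩
  · intro v j hv
    obtain ⟨hp, hn⟩ := h2 v j hv
    exact ⟨List.cons_prefix_cons.2 ⟨rfl, hp⟩, fun hc => hn (by injection hc)⟩
  · intro v hv
    obtain ⟨hp, hn⟩ := h3 v hv
    constructor
    · intro hc; exact hp (List.cons_prefix_cons.1 hc).2
    · intro hc; exact hn (List.cons_prefix_cons.1 hc).2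

lemma minor_f_mono {m : ℕ} {f : List (Fin 2) → List ℕ}
    (hstep : ∀ (v : List (Fin 2)) (j : Fin 2), v.length < m →
        f v <+: f (v ++ [j]) ∧ f v ≠ f (v ++ [j])) :
    ∀ (w u : List (Fin 2)), (u ++ w).length ≤ m → f u <+: f (u ++ w) := by
  intro w
  induction w using List.reverseRecOn with
  | nil => intro u _; simp
  | append_singleton w j ih =>
      intro u h
      have hl : (u ++ w).length < m := by
        simp only [List.length_append, List.length_append, List.length_singleton] at h ⊢
        omega
      have h1 := ih u (le_of_lt hl)
      have h2 := (hstep (u ++ w) j hl).1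
      rw [← List.append_assoc]
      exact h1.trans h2

lemma cons_tail_eq {l : List ℕ} {i : ℕ} (h : [i] <+: l) : i :: l.tail = l := by
  obtain ⟨t, rfl⟩ := h; rfl

lemma prefix_iff_tail {i : ℕ} {a b : List ℕ} (ha : [i] <+: a) (hb : [i] <+: b) :
    a <+: b ↔ a.tail <+: b.tail := by
  obtain ⟨ta, rfl⟩ := ha; obtain ⟨tb, rfl⟩ := hb
  simp [List.cons_prefix_cons]

lemma ne_iff_tail {i : ℕ} {a b : List ℕ} (ha : [i] <+: a) (hb : [i] <+: b) :
    a ≠ b ↔ a.tail ≠ b.tail := by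
  obtain ⟨ta, rfl⟩ := ha; obtain ⟨tb, rfl⟩ := hb
  simp

lemma two_children_lift {T : Finset (List ℕ)} (h0 : [] ∈ T) {i i' k : ℕ}
    (hne : i ≠ i') (h1 : HasFBTMinor (childT T i) k)
    (h2 : HasFBTMinor (childT T i') k) : HasFBTMinor T (k + 1) := by
  obtain ⟨f, f1, f2, f3⟩ := h1
  obtain ⟨g, g1, g2, g3⟩ := h2
  refine ⟨fun v => match v with
    | [] => []
    | b :: w => if b = 0 then i :: f w else i' :: g w, ?_, ?_, ?_⟩
  · intro v hv
    match v with
    | [] => exact h0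
    | b :: w =>
        have hw : w.length ≤ k := by simpa using hv
        show (if b = 0 then i :: f w else i' :: g w) ∈ T
        by_cases hb : b = 0
        · simp only [if_pos hb]; exact mem_childT.1 (f1 w hw)
        · simp only [if_neg hb]; exact mem_childT.1 (g1 w hw)
  · intro v j hv
    match v with
    | [] =>
        constructor
        · exact List.nil_prefix
        · intro hc
          by_cases hj : j = 0 <;> simp [hj] at hc
    | b :: w =>
        have hw : w.length < k := by simpa using hv
        show (if b = 0 then i :: f w else i' :: g w) <+:
              (if b = 0 then i :: f (w ++ [j]) else i' :: g (w ++ [j])) ∧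
             (if b = 0 then i :: f w else i' :: g w) ≠
              (if b = 0 then i :: f (w ++ [j]) else i' :: g (w ++ [j]))
        by_cases hb : b = 0
        · simp only [if_pos hb]
          obtain ⟨hp, hn⟩ := f2 w j hw
          exact ⟨List.cons_prefix_cons.2 ⟨rfl, hp⟩, fun hc => hn (by injection hc)⟩
        · simp only [if_neg hb]
          obtain ⟨hp, hn⟩ := g2 w j hw
          exact ⟨List.cons_prefix_cons.2 ⟨rfl, hp⟩, fun hc => hn (by injection hc)⟩
  · intro v hv
    match v with
    | [] =>
        constructor
        · intro hc
          simp only [List.nil_append] at hc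
          have := (List.cons_prefix_cons.1 (by simpa using hc)).1
          exact hne this
        · intro hc
          simp only [List.nil_append] at hc
          have := (List.cons_prefix_cons.1 (by simpa using hc)).1
          exact hne this.symm
    | b :: w =>
        have hw : w.length < k := by simpa using hv
        show ¬ (if b = 0 then i :: f (w ++ [0]) else i' :: g (w ++ [0])) <+:
              (if b = 0 then i :: f (w ++ [1]) else i' :: g (w ++ [1])) ∧
             ¬ (if b = 0 then i :: f (w ++ [1]) else i' :: g (w ++ [1])) <+:
              (if b = 0 then i :: f (w ++ [0]) else i' :: g (w ++ [0]))
        by_cases hb : b = 0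
        · simp only [if_pos hb]
          obtain ⟨hp, hn⟩ := f3 w hw
          exact ⟨fun hc => hp (List.cons_prefix_cons.1 hc).2,
                 fun hc => hn (List.cons_prefix_cons.1 hc).2⟩
        · simp only [if_neg hb]
          obtain ⟨hp, hn⟩ := g3 w hw
          exact ⟨fun hc => hp (List.cons_prefix_cons.1 hc).2,
                 fun hc => hn (List.cons_prefix_cons.1 hc).2⟩

lemma no_minor_combine {T : Finset (List ℕ)} (hT : IsTreeSet T) {k : ℕ}
    (hch : ∀ i, [i] ∈ T → ¬ HasFBTMinor (childT T i) (k + 1))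
    (huniq : ∀ i i', i ≠ i' → [i] ∈ T → [i'] ∈ T →
        ¬ (HasFBTMinor (childT T i) k ∧ HasFBTMinor (childT T i') k)) :
    ¬ HasFBTMinor T (k + 1) := by
  rintro ⟨f, hmem, hstep, hinc⟩
  have hks : (0:ℕ) < k + 1 := Nat.succ_pos k
  -- f [b] is nonempty for each bit b
  have hnonnil : ∀ b : Fin 2, f [b] ≠ [] := by
    intro b hb
    have h := hstep [] b (by simpa using hks)
    simp only [List.nil_append] at h
    rw [hb] at h
    exact h.2 (List.prefix_nil.1 h.1)
  -- heads
  set i0 := (f [0]).headI with hi0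
  set i1 := (f [1]).headI with hi1
  have hpref0 : [i0] <+: f [0] := by
    obtain ⟨a, t, h⟩ := List.exists_cons_of_ne_nil (hnonnil 0)
    rw [h]; simp [hi0, h]
  have hpref1 : [i1] <+: f [1] := by
    obtain ⟨a, t, h⟩ := List.exists_cons_of_ne_nil (hnonnil 1)
    rw [h]; simp [hi1, h]
  have hmem0 : [i0] ∈ T := treeSet_prefix_mem hT hpref0 (hmem [0] (by simp))
  have hmem1 : [i1] ∈ T := treeSet_prefix_mem hT hpref1 (hmem [1] (by simp))
  -- general prefix fact: [head of f[b]] prefixes f([b] ++ v)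
  have hprefv : ∀ (b : Fin 2) (v : List (Fin 2)), v.length ≤ k →
      f [b] <+: f ([b] ++ v) := by
    intro b v hv
    exact minor_f_mono hstep v [b] (by simpa using hv)
  -- subtree minors: for each bit b, childT T (headI (f [b])) has FBT_k
  have hsub : ∀ b : Fin 2, HasFBTMinor (childT T ((f [b]).headI)) k := by
    intro b
    have hb1 : [(f [b]).headI] <+: f [b] := by
      obtain ⟨a, t, h⟩ := List.exists_cons_of_ne_nil (hnonnil b)
      rw [h]; simp [h]
    have hp : ∀ v : List (Fin 2), v.length ≤ k → [(f [b]).headI] <+: f ([b] ++ v) :=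
      fun v hv => hb1.trans (hprefv b v hv)
    refine ⟨fun v => (f ([b] ++ v)).tail, ?_, ?_, ?_⟩
    · intro v hv
      rw [mem_childT, cons_tail_eq (hp v hv)]
      exact hmem ([b] ++ v) (by simpa using hv)
    · intro v j hv
      have h := hstep ([b] ++ v) j (by simpa using hv)
      rw [List.append_assoc] at h
      exact ⟨(prefix_iff_tail (hp v (le_of_lt hv)) (hp (v ++ [j]) (by simpa using hv))).1 h.1,
             (ne_iff_tail (hp v (le_of_lt hv)) (hp (v ++ [j]) (by simpa using hv))).1 h.2⟩
    · intro v hv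
      have h := hinc ([b] ++ v) (by simpa using hv)
      rw [List.append_assoc, List.append_assoc] at h
      have hp0 := hp (v ++ [0]) (by simpa using hv)
      have hp1 := hp (v ++ [1]) (by simpa using hv)
      exact ⟨fun hc => h.1 ((prefix_iff_tail hp0 hp1).2 hc),
             fun hc => h.2 ((prefix_iff_tail hp1 hp0).2 hc)⟩
  by_cases hii : i0 = i1
  · -- same child subtree: build FBT (k+1) in childT T i0
    apply hch i0 hmem0
    -- every nonempty binary string maps into the i0-subtree
    have hall : ∀ (b : Fin 2) (w : List (Fin 2)), (b :: w).length ≤ k + 1 →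
        [i0] <+: f (b :: w) := by
      intro b w hw
      have : f [b] <+: f (b :: w) := by
        have := minor_f_mono hstep w [b] (by simpa using hw)
        simpa using this
      refine List.IsPrefix.trans ?_ this
      have : b = 0 ∨ b = 1 := by omega
      rcases this with rfl | rfl
      · exact hpref0
      · rw [hii] at *; exact hpref1
    refine ⟨fun v => match v with
      | [] => []
      | b :: w => (f (b :: w)).tail, ?_, ?_, ?_⟩
    · intro v hv
      match v with
      | [] => rw [mem_childT]; simpa using hmem0
      | b :: w =>
          rw [mem_childT, cons_tail_eq (hall b w hv)]
          exact hmem (b :: w) hv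
    · intro v j hv
      match v with
      | [] =>
          simp only [List.nil_append]
          constructor
          · exact List.nil_prefix
          · intro hc
            -- tail (f [j]) = [] would mean f [j] = [i0]
            have hj : [i0] <+: f [j] := hall j [] (by simpa using hks)
            have : f [j] = [i0] := by
              rw [← cons_tail_eq hj, ← hc]
            -- then f [j] <+: f [other], contradicting incomparability
            have hinc0 := hinc [] (by simpa using hks)
            simp only [List.nil_append] at hinc0
            have : j = 0 ∨ j = 1 := by omega
            rcases this with rfl | rfl
            · exact hinc0.1 (by rw [‹f [0] = [i0]›]; exact hall 1 [] (by simpa using hks))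
            · exact hinc0.2 (by rw [‹f [1] = [i0]›]; exact hall 0 [] (by simpa using hks))
      | b :: w =>
          have h := hstep (b :: w) j hv
          have hw1 : [i0] <+: f (b :: w) := hall b w (le_of_lt hv)
          have hw2 : [i0] <+: f ((b :: w) ++ [j]) := by
            rw [List.cons_append]
            exact hall b (w ++ [j]) (by simpa using hv)
          show (f (b :: w)).tail <+: (f ((b :: w) ++ [j])).tail ∧
               (f (b :: w)).tail ≠ (f ((b :: w) ++ [j])).tail
          exact ⟨(prefix_iff_tail hw1 hw2).1 h.1, (ne_iff_tail hw1 hw2).1 h.2⟩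
    · intro v hv
      match v with
      | [] =>
          simp only [List.nil_append]
          have hinc0 := hinc [] (by simpa using hks)
          simp only [List.nil_append] at hinc0
          have h0 : [i0] <+: f [0] := hall 0 [] (by simpa using hks)
          have h1 : [i0] <+: f [1] := hall 1 [] (by simpa using hks)
          exact ⟨fun hc => hinc0.1 ((prefix_iff_tail h0 h1).2 hc),
                 fun hc => hinc0.2 ((prefix_iff_tail h1 h0).2 hc)⟩
      | b :: w =>
          have h := hinc (b :: w) hv
          have h0 : [i0] <+: f ((b :: w) ++ [0]) := by
            rw [List.cons_append]; exact hall b (w ++ [0]) (by simpa using hv)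
          have h1 : [i0] <+: f ((b :: w) ++ [1]) := by
            rw [List.cons_append]; exact hall b (w ++ [1]) (by simpa using hv)
          show ¬ (f ((b :: w) ++ [0])).tail <+: (f ((b :: w) ++ [1])).tail ∧
               ¬ (f ((b :: w) ++ [1])).tail <+: (f ((b :: w) ++ [0])).tail
          exact ⟨fun hc => h.1 ((prefix_iff_tail h0 h1).2 hc),
                 fun hc => h.2 ((prefix_iff_tail h1 h0).2 hc)⟩
  · exact huniq i0 i1 hii hmem0 hmem1 ⟨hsub 0, hsub 1⟩

-- ===== ell basics =====

def ellSet (d k n : ℕ) : Set ℕ :=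
  { L : ℕ | ∃ T : Finset (List ℕ),
    IsTreeSet T ∧ DegLE T d ∧ DepthLE T n ∧ ¬ HasFBTMinor T (k + 1) ∧
    leafCount T = L }

lemma ell_eq_sSup (d k n : ℕ) : ell d k n = sSup (ellSet d k n) := rfl

lemma singleton_isTreeSet : IsTreeSet ({[]} : Finset (List ℕ)) := by
  constructor
  · simp
  · intro v i h
    simp only [Finset.mem_singleton] at h
    exact absurd h (by simp)

lemma singleton_no_minor {m : ℕ} (hm : 1 ≤ m) :
    ¬ HasFBTMinor ({[]} : Finset (List ℕ)) m := by
  rintro ⟨f, h1, h2, _⟩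
  have ha : f [] = [] := by simpa using h1 [] (by simp)
  have hb : f [(0 : Fin 2)] = [] := by simpa using h1 [0] (by simpa using hm)
  have := h2 [] 0 (by simp; omega)
  simp only [List.nil_append] at this
  exact this.2 (ha.trans hb.symm)

lemma one_mem_ellSet (d k n : ℕ) : 1 ∈ ellSet d k n := by
  refine ⟨{[]}, singleton_isTreeSet, ?_, ?_, singleton_no_minor (by omega),
    leafCount_singleton⟩
  · intro v hv
    have : { i : ℕ | v ++ [i] ∈ ({[]} : Finset (List ℕ)) } = ∅ := by
      ext i; simp
    rw [this]; simp
  · intro v hv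
    simp only [Finset.mem_singleton] at hv
    simp [hv]

lemma ellSet_bddAbove (d k n : ℕ) : BddAbove (ellSet d k n) := by
  refine ⟨(d + 1) ^ n, fun L hL => ?_⟩
  obtain ⟨T, hT, hd, hn, _, rfl⟩ := hL
  exact leafCount_bound hT hd hn

lemma ellSet_nonempty (d k n : ℕ) : (ellSet d k n).Nonempty :=
  ⟨1, one_mem_ellSet d k n⟩

lemma ell_mem (d k n : ℕ) : ell d k n ∈ ellSet d k n :=
  Nat.sSup_mem (ellSet_nonempty d k n) (ellSet_bddAbove d k n)

lemma le_ell {d k n L : ℕ} (h : L ∈ ellSet d k n) : L ≤ ell d k n :=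
  le_csSup (ellSet_bddAbove d k n) h

lemma one_le_ell (d k n : ℕ) : 1 ≤ ell d k n := le_ell (one_mem_ellSet d k n)

lemma ell_mono_k {d k k' n : ℕ} (h : k' ≤ k) : ell d k' n ≤ ell d k n := by
  apply csSup_le_csSup (ellSet_bddAbove d k n) (ellSet_nonempty d k' n)
  rintro L ⟨T, h1, h2, h3, h4, h5⟩
  exact ⟨T, h1, h2, h3, fun hm => h4 (minor_mono (by omega) hm), h5⟩

lemma ell_d_zero (k m : ℕ) : ell 0 k m = 1 := by
  apply le_antisymm
  · apply csSup_le (ellSet_nonempty 0 k m)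
    rintro L ⟨T, h1, h2, h3, h4, rfl⟩
    have hci : childIdx T = ∅ := by
      have := childIdx_card_le h2 h1.1
      simpa [Finset.card_eq_zero] using this
    rw [childIdx_empty_tree h1 hci, leafCount_singleton]
  · exact one_le_ell 0 k m

-- ===== upper bound =====

lemma ell_upper {d k n : ℕ} (hk : 1 ≤ k) {T : Finset (List ℕ)}
    (hT : IsTreeSet T) (hd : DegLE T d) (hn : DepthLE T (n + 1))
    (hm : ¬ HasFBTMinor T (k + 1)) :
    leafCount T ≤ ell d k n + (d - 1) * ell d (k - 1) n := by
  rcases (childIdx T).eq_empty_or_nonempty with h | h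
  · rw [childIdx_empty_tree hT h, leafCount_singleton]
    have := one_le_ell d k n
    omega
  · rw [leafCount_decomp hT h]
    -- each child subtree avoids FBT (k+1)
    have hchm : ∀ i ∈ childIdx T, ¬ HasFBTMinor (childT T i) (k + 1) :=
      fun i _ hmi => hm (minor_lift hmi)
    -- at most one child subtree has FBT k
    have huniq : ∀ i ∈ childIdx T, ∀ i' ∈ childIdx T, i ≠ i' →
        ¬ (HasFBTMinor (childT T i) k ∧ HasFBTMinor (childT T i') k) := by
      rintro i hi i' hi' hne ⟨m1, m2⟩
      exact hm (two_children_lift hT.1 hne m1 m2)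
    -- bounds on each child
    have hone : ∀ i ∈ childIdx T, leafCount (childT T i) ≤ ell d k n := by
      intro i hi
      exact le_ell ⟨childT T i, childT_isTreeSet hT (mem_childIdx.1 hi),
        childT_degLE hd i, childT_depthLE hn i, hchm i hi, rfl⟩
    have hsmall : ∀ i ∈ childIdx T, ¬ HasFBTMinor (childT T i) k →
        leafCount (childT T i) ≤ ell d (k - 1) n := by
      intro i hi hnm
      refine le_ell ⟨childT T i, childT_isTreeSet hT (mem_childIdx.1 hi),
        childT_degLE hd i, childT_depthLE hn i, ?_, rfl⟩
      rw [show k - 1 + 1 = k by omega]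
      exact hnm
    -- choose the special child
    obtain ⟨i₀, hi₀, hsp⟩ : ∃ i₀ ∈ childIdx T, ∀ i ∈ childIdx T, i ≠ i₀ →
        ¬ HasFBTMinor (childT T i) k := by
      by_cases hex : ∃ i ∈ childIdx T, HasFBTMinor (childT T i) k
      · obtain ⟨i₀, hi₀, hmi₀⟩ := hex
        exact ⟨i₀, hi₀, fun i hi hne hmi => huniq i hi i₀ hi₀ hne ⟨hmi, hmi₀⟩⟩
      · obtain ⟨i₀, hi₀⟩ := h
        push_neg at hex
        exact ⟨i₀, hi₀, fun i hi _ => hex i hi⟩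
    rw [← Finset.add_sum_erase _ _ hi₀]
    have hcard : ((childIdx T).erase i₀).card ≤ d - 1 := by
      rw [Finset.card_erase_of_mem hi₀]
      have := childIdx_card_le hd hT.1
      omega
    calc leafCount (childT T i₀) + ∑ i ∈ (childIdx T).erase i₀, leafCount (childT T i)
        ≤ ell d k n + ∑ _i ∈ (childIdx T).erase i₀, ell d (k - 1) n := by
          refine Nat.add_le_add (hone i₀ hi₀) (Finset.sum_le_sum fun i hi => ?_)
          have hie := Finset.mem_of_mem_erase hi
          exact hsmall i hie (hsp i hie (Finset.ne_of_mem_erase hi))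
      _ = ell d k n + ((childIdx T).erase i₀).card * ell d (k - 1) n := by
          rw [Finset.sum_const, smul_eq_mul]
      _ ≤ ell d k n + (d - 1) * ell d (k - 1) n := by
          exact Nat.add_le_add_left (Nat.mul_le_mul_right _ hcard) _

-- ===== construction =====

section Construction

variable (d : ℕ) (W : ℕ → Finset (List ℕ))

def combT : Finset (List ℕ) :=
  insert [] ((Finset.range d).biUnion fun i => (W i).image (i :: ·))

lemma mem_combT {v : List ℕ} :
    v ∈ combT d W ↔ v = [] ∨ ∃ i < d, ∃ w ∈ W i, v = i :: w := by
  simp only [combT, Finset.mem_insert, Finset.mem_biUnion, Finset.mem_range,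
    Finset.mem_image]
  constructor
  · rintro (rfl | ⟨i, hi, w, hw, rfl⟩)
    · exact Or.inl rfl
    · exact Or.inr ⟨i, hi, w, hw, rfl⟩
  · rintro (rfl | ⟨i, hi, w, hw, rfl⟩)
    · exact Or.inl rfl
    · exact Or.inr ⟨i, hi, w, hw, rfl⟩

variable (hW : ∀ i, i < d → IsTreeSet (W i))

include hW

lemma combT_isTreeSet : IsTreeSet (combT d W) := by
  constructor
  · rw [mem_combT]; exact Or.inl rfl
  · intro v j h
    rw [mem_combT] at h
    rcases h with h | ⟨i, hi, w, hw, he⟩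
    · exact absurd h (by simp)
    · cases v with
      | nil => rw [mem_combT]; exact Or.inl rfl
      | cons a v' =>
          rw [List.cons_append] at he
          injection he with h1 h2
          subst h1
          rw [mem_combT]
          exact Or.inr ⟨a, hi, v', (hW a hi).2 v' j (h2 ▸ hw), rfl⟩

lemma childT_combT {i : ℕ} (hi : i < d) : childT (combT d W) i = W i := by
  ext w
  rw [mem_childT, mem_combT]
  constructor
  · rintro (h | ⟨i', hi', w', hw', he⟩)
    · exact absurd h (by simp)
    · injection he with h1 h2
      subst h1; subst h2; exact hw'
  · intro h
    exact Or.inr ⟨i, hi, w, h, rfl⟩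

lemma childIdx_combT : childIdx (combT d W) = Finset.range d := by
  ext i
  rw [mem_childIdx, mem_combT, Finset.mem_range]
  constructor
  · rintro (h | ⟨i', hi', w, hw, he⟩)
    · exact absurd h (by simp)
    · injection he with h1 h2
      subst h1; omega
  · intro h
    exact Or.inr ⟨i, h, [], (hW i h).1, rfl⟩

lemma combT_degLE (hd : ∀ i, i < d → DegLE (W i) d) : DegLE (combT d W) d := by
  intro v hv
  rw [mem_combT] at hv
  rcases hv with rfl | ⟨i, hi, w, hw, rfl⟩
  · have : { j : ℕ | [] ++ [j] ∈ combT d W } = ↑(childIdx (combT d W)) := by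
      ext j; simp [mem_childIdx]
    rw [this, Set.ncard_coe_finset, childIdx_combT d W hW, Finset.card_range]
  · have : { j : ℕ | (i :: w) ++ [j] ∈ combT d W } = { j : ℕ | w ++ [j] ∈ W i } := by
      ext j
      simp only [List.cons_append, Set.mem_setOf_eq, mem_combT]
      constructor
      · rintro (h | ⟨i', hi', w', hw', he⟩)
        · exact absurd h (by simp)
        · injection he with h1 h2
          subst h1; subst h2; exact hw'
      · intro h; exact Or.inr ⟨i, hi, w ++ [j], h, rfl⟩
    rw [this]
    exact hd i hi (w) hw

lemma combT_depthLE {n : ℕ} (hn : ∀ i, i < d → DepthLE (W i) n) :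
    DepthLE (combT d W) (n + 1) := by
  intro v hv
  rw [mem_combT] at hv
  rcases hv with rfl | ⟨i, hi, w, hw, rfl⟩
  · simp
  · have := hn i hi w hw
    simp only [List.length_cons]
    omega

lemma combT_leafCount (hd : 1 ≤ d) :
    leafCount (combT d W) = ∑ i ∈ Finset.range d, leafCount (W i) := by
  rw [leafCount_decomp (combT_isTreeSet d W hW)
      (by rw [childIdx_combT d W hW]; exact ⟨0, by simp; omega⟩),
    childIdx_combT d W hW]
  exact Finset.sum_congr rfl fun i hi => by
    rw [childT_combT d W hW (Finset.mem_range.1 hi)]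

lemma combT_no_minor {k : ℕ}
    (hnm : ∀ i, i < d → ¬ HasFBTMinor (W i) (k + 1))
    (huniq : ∀ i i', i < d → i' < d → i ≠ i' →
        ¬ (HasFBTMinor (W i) k ∧ HasFBTMinor (W i') k)) :
    ¬ HasFBTMinor (combT d W) (k + 1) := by
  have hroot : ∀ i : ℕ, [i] ∈ combT d W → i < d := by
    intro i h
    have := (childIdx_combT d W hW) ▸ mem_childIdx.2 h
    simpa using this
  apply no_minor_combine (combT_isTreeSet d W hW)
  · intro i hi
    rw [childT_combT d W hW (hroot i hi)]
    exact hnm i (hroot i hi)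
  · intro i i' hne hi hi'
    rw [childT_combT d W hW (hroot i hi), childT_combT d W hW (hroot i' hi')]
    exact huniq i i' (hroot i hi) (hroot i' hi') hne

end Construction


/-- The recurrence `ℓ_d^k(n) = ℓ_d^k(n−1) + (d−1)·ℓ_d^{k−1}(n−1)` for `k ≥ 1`
and `n ≥ 1`. -/
theorem ell_recurrence (d k n : ℕ) (hk : 1 ≤ k) :
    ell d k (n + 1) = ell d k n + (d - 1) * ell d (k - 1) n := by
  rcases Nat.eq_zero_or_pos d with rfl | hd
  · simp [ell_d_zero]
  · apply le_antisymm
    · apply csSup_le (ellSet_nonempty d k (n + 1))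
      rintro L ⟨T, h1, h2, h3, h4, rfl⟩
      exact ell_upper hk h1 h2 h3 h4
    · obtain ⟨T₀, t1, t2, t3, t4, t5⟩ := ell_mem d k n
      obtain ⟨U, u1, u2, u3, u4, u5⟩ := ell_mem d (k - 1) n
      rw [show k - 1 + 1 = k by omega] at u4
      set W : ℕ → Finset (List ℕ) := fun i => if i = 0 then T₀ else U with hWdef
      have hW0 : W 0 = T₀ := by simp [hWdef]
      have hWi : ∀ i, i ≠ 0 → W i = U := fun i hi => by simp [hWdef, hi]
      have hW : ∀ i, i < d → IsTreeSet (W i) := by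
        intro i _
        by_cases hi : i = 0
        · rw [hi, hW0]; exact t1
        · rw [hWi i hi]; exact u1
      apply le_ell
      refine ⟨combT d W, combT_isTreeSet d W hW, ?_, ?_, ?_, ?_⟩
      · refine combT_degLE d W hW fun i _ => ?_
        by_cases hi : i = 0
        · rw [hi, hW0]; exact t2
        · rw [hWi i hi]; exact u2
      · refine combT_depthLE d W hW fun i _ => ?_
        by_cases hi : i = 0
        · rw [hi, hW0]; exact t3
        · rw [hWi i hi]; exact u3
      · refine combT_no_minor d W hW ?_ ?_
        · intro i _
          by_cases hi : i = 0
          · rw [hi, hW0]; exact t4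
          · rw [hWi i hi]
            exact fun hm => u4 (minor_mono (by omega) hm)
        · rintro i i' _ _ hne ⟨m1, m2⟩
          by_cases hi : i = 0
          · have hi' : i' ≠ 0 := by omega
            rw [hWi i' hi'] at m2
            exact u4 m2
          · rw [hWi i hi] at m1
            exact u4 m1
      · rw [combT_leafCount d W hW hd]
        have h0 : (0 : ℕ) ∈ Finset.range d := by simpa using hd
        rw [← Finset.add_sum_erase _ _ h0, hW0, t5]
        congr 1
        have : ∀ i ∈ (Finset.range d).erase 0, leafCount (W i) = ell d (k - 1) n := by
          intro i hi
          rw [hWi i (Finset.ne_of_mem_erase hi), u5]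
        rw [Finset.sum_congr rfl this, Finset.sum_const, smul_eq_mul,
          Finset.card_erase_of_mem h0, Finset.card_range]
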